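/- If a graph G is 3-regular, has girth at least 6, and for every vertex v with neighbors v1, v2, v3 and further neighbors w_i, w_i' of v_i, any precoloring of the edges v1w1, v2w2, v3w3 from their lists extends to a strong list edge coloring of G − v, then combined with the counting claims (1)–(5) on the lists B_i = L(v_iw_i) ∪ L(v_iw_i') and L_i = L(vv_i) of sizes ≥ 11, G is strongly L-edge-colorable — contradicting minimality; hence no minimal counterexample to χ'_{s,l}(G) ≤ 11 for subcubic G exists. -/

import Mathlib

def StrongSees {V : Type*} (G : SimpleGraph V) (e e' : Sym2 V) : Prop :=
  (∃ v, v ∈ e ∧ v ∈ e') ∨ (∃ u v, u ∈ e ∧ v ∈ e' ∧ G.Adj u v)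

def IsStrongEdgeColoring {V β : Type*} (G : SimpleGraph V) (c : Sym2 V → β) : Prop :=
  ∀ e ∈ G.edgeSet, ∀ e' ∈ G.edgeSet, e ≠ e' → StrongSees G e e' → c e ≠ c e'

def StronglyListColorable {V β : Type*} (G : SimpleGraph V) (L : Sym2 V → Finset β) : Prop :=
  ∃ c : Sym2 V → β, IsStrongEdgeColoring G c ∧ ∀ e ∈ G.edgeSet, c e ∈ L e

/-- The graph obtained from `G` by deleting the vertex `v`. -/
def deleteVertex {V : Type*} (G : SimpleGraph V) (v : V) : SimpleGraph V where
  Adj x y := G.Adj x y ∧ x ≠ v ∧ y ≠ v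
  symm := ⟨fun _ _ h => ⟨h.1.symm, h.2.2, h.2.1⟩⟩
  loopless := ⟨fun x h => G.loopless.irrefl x h.1⟩

section AuxCombinatorics
variable {β : Type*} [DecidableEq β]

private lemma pick123 (A B C : Finset β) (hA : 1 ≤ A.card) (hB : 2 ≤ B.card)
    (hC : 3 ≤ C.card) :
    ∃ a ∈ A, ∃ b ∈ B, ∃ c ∈ C, a ≠ b ∧ a ≠ c ∧ b ≠ c := by
  obtain ⟨a, ha⟩ := Finset.card_pos.mp (show 0 < A.card by omega)
  have hBc := Finset.card_le_card_sdiff_add_card (s := B) (t := {a})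
  simp only [Finset.card_singleton] at hBc
  obtain ⟨b, hb⟩ := Finset.card_pos.mp (show 0 < (B \ {a}).card by omega)
  have hCc := Finset.card_le_card_sdiff_add_card (s := C) (t := {a, b})
  have hab2 : ({a, b} : Finset β).card ≤ 2 := by
    have := Finset.card_insert_le a ({b} : Finset β)
    simp only [Finset.card_singleton] at this; omega
  obtain ⟨c, hc⟩ := Finset.card_pos.mp (show 0 < (C \ {a, b}).card by omega)
  simp only [Finset.mem_sdiff, Finset.mem_singleton, Finset.mem_insert, not_or] at hb hc
  exact ⟨a, ha, b, hb.1, c, hc.1, fun h => hb.2 h.symm, fun h => hc.2.1 h.symm,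
    fun h => hc.2.2 h.symm⟩

private lemma greedy3 (A1 A2 A3 : Finset β) (k1 k2 k3 : ℕ)
    (h1 : 4 ≤ A1.card + k1) (h2 : 4 ≤ A2.card + k2) (h3 : 4 ≤ A3.card + k3)
    (hk1 : k1 ≤ 3) (hk2 : k2 ≤ 3) (hk3 : k3 ≤ 3)
    (hk : k1 + k2 + k3 ≤ 5) :
    ∃ a1 ∈ A1, ∃ a2 ∈ A2, ∃ a3 ∈ A3, a1 ≠ a2 ∧ a1 ≠ a3 ∧ a2 ≠ a3 := by
  rcases le_total k1 k2 with h12 | h12 <;> rcases le_total k2 k3 with h23 | h23 <;>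
    rcases le_total k1 k3 with h13 | h13
  · obtain ⟨x, hx, y, hy, z, hz, n1, n2, n3⟩ := pick123 A3 A2 A1 (by omega) (by omega) (by omega)
    exact ⟨z, hz, y, hy, x, hx, fun h => n3 h.symm, fun h => n2 h.symm, fun h => n1 h.symm⟩
  · obtain ⟨x, hx, y, hy, z, hz, n1, n2, n3⟩ := pick123 A3 A2 A1 (by omega) (by omega) (by omega)
    exact ⟨z, hz, y, hy, x, hx, fun h => n3 h.symm, fun h => n2 h.symm, fun h => n1 h.symm⟩
  · obtain ⟨x, hx, y, hy, z, hz, n1, n2, n3⟩ := pick123 A2 A3 A1 (by omega) (by omega) (by omega)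
    exact ⟨z, hz, x, hx, y, hy, fun h => n2 h.symm, fun h => n3 h.symm, n1⟩
  · obtain ⟨x, hx, y, hy, z, hz, n1, n2, n3⟩ := pick123 A2 A1 A3 (by omega) (by omega) (by omega)
    exact ⟨y, hy, x, hx, z, hz, fun h => n1 h.symm, n3, n2⟩
  · obtain ⟨x, hx, y, hy, z, hz, n1, n2, n3⟩ := pick123 A3 A1 A2 (by omega) (by omega) (by omega)
    exact ⟨y, hy, z, hz, x, hx, n3, fun h => n1 h.symm, fun h => n2 h.symm⟩
  · obtain ⟨x, hx, y, hy, z, hz, n1, n2, n3⟩ := pick123 A1 A3 A2 (by omega) (by omega) (by omega)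
    exact ⟨x, hx, z, hz, y, hy, n2, n1, fun h => n3 h.symm⟩
  · obtain ⟨x, hx, y, hy, z, hz, n1, n2, n3⟩ := pick123 A1 A2 A3 (by omega) (by omega) (by omega)
    exact ⟨x, hx, y, hy, z, hz, n1, n2, n3⟩
  · obtain ⟨x, hx, y, hy, z, hz, n1, n2, n3⟩ := pick123 A1 A2 A3 (by omega) (by omega) (by omega)
    exact ⟨x, hx, y, hy, z, hz, n1, n2, n3⟩

private lemma pick_colors (L1 L2 L3 B1 B2 B3 : Finset β)
    (hL1 : L1.card ≤ 11) (hL2 : L2.card ≤ 11) (hL3 : L3.card ≤ 11)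
    (hB1 : 11 ≤ B1.card) (hB2 : 11 ≤ B2.card) (hB3 : 11 ≤ B3.card) :
    ∃ c1 ∈ B1, ∃ c2 ∈ B2, ∃ c3 ∈ B3,
      (L1 ∩ {c1, c2, c3}).card + (L2 ∩ {c1, c2, c3}).card
        + (L3 ∩ {c1, c2, c3}).card ≤ 5 := by
  by_contra hno
  push_neg at hno
  set d : β → ℕ := fun c => (if c ∈ L1 then 1 else 0) + (if c ∈ L2 then 1 else 0)
    + (if c ∈ L3 then 1 else 0) with hd
  have hd3 : ∀ c, d c ≤ 3 := by intro c; simp only [hd]; split_ifs <;> omega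
  have hone : ∀ (Lx : Finset β) (S : Finset β), Lx.card ≤ 11 →
      (∑ c ∈ S, if c ∈ Lx then 1 else 0) ≤ 11 := by
    intro Lx S hLx
    rw [Finset.sum_boole, Nat.cast_id]
    exact le_trans (Finset.card_le_card (fun x hx => (Finset.mem_filter.mp hx).2)) hLx
  have hsumS : ∀ S : Finset β, ∑ c ∈ S, d c ≤ 33 := by
    intro S
    have he : ∑ c ∈ S, d c = (∑ c ∈ S, if c ∈ L1 then 1 else 0)
        + (∑ c ∈ S, if c ∈ L2 then 1 else 0) + (∑ c ∈ S, if c ∈ L3 then 1 else 0) := by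
      simp only [hd]; rw [Finset.sum_add_distrib, Finset.sum_add_distrib]
    rw [he]
    have := hone L1 S hL1; have := hone L2 S hL2; have := hone L3 S hL3; omega
  have hinter : ∀ (Lx S : Finset β), (Lx ∩ S).card = ∑ c ∈ S, if c ∈ Lx then 1 else 0 := by
    intro Lx S
    rw [Finset.sum_boole, Nat.cast_id, Finset.filter_mem_eq_inter, Finset.inter_comm]
  have hP : ∀ c1 ∈ B1, ∀ c2 ∈ B2, ∀ c3 ∈ B3,
      6 ≤ ∑ c ∈ ({c1, c2, c3} : Finset β), d c := by
    intro c1 hc1 c2 hc2 c3 hc3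
    have h := hno c1 hc1 c2 hc2 c3 hc3
    have he : ∑ c ∈ ({c1, c2, c3} : Finset β), d c
        = (L1 ∩ {c1, c2, c3}).card + (L2 ∩ {c1, c2, c3}).card
          + (L3 ∩ {c1, c2, c3}).card := by
      rw [hinter L1, hinter L2, hinter L3]
      simp only [hd]; rw [Finset.sum_add_distrib, Finset.sum_add_distrib]
    omega
  have case2 : ∀ (X Y Z : Finset β), 11 ≤ Z.card →
      (∀ x ∈ X, ∀ y ∈ Y, ∀ z ∈ Z, 6 ≤ ∑ c ∈ ({x, y, z} : Finset β), d c) →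
      ∀ c0, c0 ∈ X → c0 ∈ Y → False := by
    intro X Y Z hZ hP' c0 hc0X hc0Y
    have hz3 : ∀ z ∈ Z, d z = 3 := by
      intro z hz
      have h := hP' c0 hc0X c0 hc0Y z hz
      by_cases hzc : z = c0
      · subst hzc
        have he : ({z, z, z} : Finset β) = {z} := by simp
        rw [he, Finset.sum_singleton] at h
        have := hd3 z; omega
      · have he : ({c0, c0, z} : Finset β) = {c0, z} := by
          ext t; simp only [Finset.mem_insert, Finset.mem_singleton]; tauto
        rw [he, Finset.sum_pair (fun hh => hzc hh.symm)] at h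
        have := hd3 c0; have := hd3 z; omega
    have hdc0 : d c0 = 3 := by
      obtain ⟨z, hz⟩ := Finset.card_pos.mp (show 0 < Z.card by omega)
      have h := hP' c0 hc0X c0 hc0Y z hz
      by_cases hzc : z = c0
      · subst hzc
        have he : ({z, z, z} : Finset β) = {z} := by simp
        rw [he, Finset.sum_singleton] at h
        have := hd3 z; omega
      · have he : ({c0, c0, z} : Finset β) = {c0, z} := by
          ext t; simp only [Finset.mem_insert, Finset.mem_singleton]; tauto
        rw [he, Finset.sum_pair (fun hh => hzc hh.symm)] at h
        have := hd3 c0; have := hd3 z; omega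
    have hsZ : ∑ c ∈ Z, d c = 3 * Z.card := by
      rw [Finset.sum_congr rfl hz3, Finset.sum_const, smul_eq_mul, mul_comm]
    have hZ11 : Z.card = 11 := by have := hsumS Z; omega
    have hc0Z : c0 ∈ Z := by
      by_contra hc0Z
      have := hsumS (insert c0 Z)
      rw [Finset.sum_insert hc0Z, hsZ, hZ11] at this
      omega
    have h := hP' c0 hc0X c0 hc0Y c0 hc0Z
    have he : ({c0, c0, c0} : Finset β) = {c0} := by simp
    rw [he, Finset.sum_singleton] at h
    omega
  by_cases h12 : (B1 ∩ B2).Nonempty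
  · obtain ⟨c0, hc0⟩ := h12
    rw [Finset.mem_inter] at hc0
    exact case2 B1 B2 B3 hB3 (fun x hx y hy z hz => hP x hx y hy z hz) c0 hc0.1 hc0.2
  by_cases h13 : (B1 ∩ B3).Nonempty
  · obtain ⟨c0, hc0⟩ := h13
    rw [Finset.mem_inter] at hc0
    refine case2 B1 B3 B2 hB2 (fun x hx y hy z hz => ?_) c0 hc0.1 hc0.2
    have h := hP x hx z hz y hy
    rwa [show ({x, z, y} : Finset β) = {x, y, z} by
      ext t; simp only [Finset.mem_insert, Finset.mem_singleton]; tauto] at h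
  by_cases h23 : (B2 ∩ B3).Nonempty
  · obtain ⟨c0, hc0⟩ := h23
    rw [Finset.mem_inter] at hc0
    refine case2 B2 B3 B1 hB1 (fun x hx y hy z hz => ?_) c0 hc0.1 hc0.2
    have h := hP z hz x hx y hy
    rwa [show ({z, x, y} : Finset β) = {x, y, z} by
      ext t; simp only [Finset.mem_insert, Finset.mem_singleton]; tauto] at h
  · have hdisj : ∀ (X Y : Finset β), ¬(X ∩ Y).Nonempty → Disjoint X Y := by
      intro X Y h
      rw [Finset.not_nonempty_iff_eq_empty] at h
      exact Finset.disjoint_iff_inter_eq_empty.mpr h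
    have d12 := hdisj _ _ h12
    have d13 := hdisj _ _ h13
    have d23 := hdisj _ _ h23
    obtain ⟨b1, hb1, hm1⟩ := Finset.exists_min_image B1 d (Finset.card_pos.mp (by omega))
    obtain ⟨b2, hb2, hm2⟩ := Finset.exists_min_image B2 d (Finset.card_pos.mp (by omega))
    obtain ⟨b3, hb3, hm3⟩ := Finset.exists_min_image B3 d (Finset.card_pos.mp (by omega))
    have n12 : b1 ≠ b2 := fun h => (Finset.disjoint_left.mp d12) hb1 (h ▸ hb2)
    have n13 : b1 ≠ b3 := fun h => (Finset.disjoint_left.mp d13) hb1 (h ▸ hb3)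
    have n23 : b2 ≠ b3 := fun h => (Finset.disjoint_left.mp d23) hb2 (h ▸ hb3)
    have h6 : 6 ≤ d b1 + d b2 + d b3 := by
      have h := hP b1 hb1 b2 hb2 b3 hb3
      rw [Finset.sum_insert (by simp [n12, n13]), Finset.sum_pair n23] at h
      omega
    have hs1 := Finset.card_nsmul_le_sum B1 d (d b1) hm1
    have hs2 := Finset.card_nsmul_le_sum B2 d (d b2) hm2
    have hs3 := Finset.card_nsmul_le_sum B3 d (d b3) hm3
    rw [smul_eq_mul] at hs1 hs2 hs3
    have t1 : 11 * d b1 ≤ B1.card * d b1 := Nat.mul_le_mul_right _ hB1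
    have t2 : 11 * d b2 ≤ B2.card * d b2 := Nat.mul_le_mul_right _ hB2
    have t3 : 11 * d b3 ≤ B3.card * d b3 := Nat.mul_le_mul_right _ hB3
    have hU : ∑ c ∈ B1 ∪ B2 ∪ B3, d c
        = ∑ c ∈ B1, d c + ∑ c ∈ B2, d c + ∑ c ∈ B3, d c := by
      rw [Finset.sum_union (by rw [Finset.disjoint_union_left]; exact ⟨d13, d23⟩),
        Finset.sum_union d12]
    have hT := hsumS (B1 ∪ B2 ∪ B3)
    rw [hU] at hT
    have hT' : B1.sum d + B2.sum d + B3.sum d ≤ 33 := hT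
    linarith [hs1, hs2, hs3, t1, t2, t3, h6, hT']

private lemma card_le_seven (x1 x2 x3 x4 x5 x6 x7 : β) :
    ({x1, x2, x3, x4, x5, x6, x7} : Finset β).card ≤ 7 := by
  refine le_trans (Finset.card_insert_le _ _) (Nat.succ_le_succ ?_)
  refine le_trans (Finset.card_insert_le _ _) (Nat.succ_le_succ ?_)
  refine le_trans (Finset.card_insert_le _ _) (Nat.succ_le_succ ?_)
  refine le_trans (Finset.card_insert_le _ _) (Nat.succ_le_succ ?_)
  refine le_trans (Finset.card_insert_le _ _) (Nat.succ_le_succ ?_)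
  refine le_trans (Finset.card_insert_le _ _) (Nat.succ_le_succ ?_)
  simp

private lemma card_le_three (x1 x2 x3 : β) : ({x1, x2, x3} : Finset β).card ≤ 3 := by
  refine le_trans (Finset.card_insert_le _ _) (Nat.succ_le_succ ?_)
  refine le_trans (Finset.card_insert_le _ _) (Nat.succ_le_succ ?_)
  simp

end AuxCombinatorics

private lemma strongSees_symm {V : Type*} {G : SimpleGraph V} {e e' : Sym2 V}
    (h : StrongSees G e e') : StrongSees G e' e := by
  rcases h with ⟨u, h1, h2⟩ | ⟨x, y, h1, h2, h3⟩
  · exact Or.inl ⟨u, h2, h1⟩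
  · exact Or.inr ⟨y, x, h2, h1, h3.symm⟩

private lemma cover_aux {V β : Type*} (G : SimpleGraph V) (v vi u2 u3 wi wi' : V)
    (φ : Sym2 V → β) (T : Finset β)
    (hNv : ∀ z, G.Adj v z → z = vi ∨ z = u2 ∨ z = u3)
    (hNvi : ∀ z, G.Adj vi z → z = v ∨ z = wi ∨ z = wi')
    (hvi : ∀ z, G.Adj vi z → z ≠ v → φ s(vi, z) ∈ T)
    (hu2 : ∀ z, G.Adj u2 z → z ≠ v → φ s(u2, z) ∈ T)
    (hu3 : ∀ z, G.Adj u3 z → z ≠ v → φ s(u3, z) ∈ T)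
    (hwi : ∀ z, G.Adj wi z → z ≠ v → φ s(wi, z) ∈ T)
    (hwi' : ∀ z, G.Adj wi' z → z ≠ v → φ s(wi', z) ∈ T) :
    ∀ e ∈ G.edgeSet, v ∉ e → StrongSees G s(v, vi) e → φ e ∈ T := by
  intro e he hve hsee
  induction e using Sym2.inductionOn with
  | hf a b =>
    have hab : G.Adj a b := G.mem_edgeSet.mp he
    have hav : a ≠ v := fun h => hve (h ▸ Sym2.mem_mk_left a b)
    have hbv : b ≠ v := fun h => hve (h ▸ Sym2.mem_mk_right a b)
    rcases hsee with ⟨u, hu, hu'⟩ | ⟨x, y, hx, hy, hxy⟩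
    · rcases Sym2.mem_iff.mp hu with rfl | rfl
      · exact absurd hu' hve
      · rcases Sym2.mem_iff.mp hu' with rfl | rfl
        · exact hvi b hab hbv
        · rw [Sym2.eq_swap]; exact hvi a hab.symm hav
    · rcases Sym2.mem_iff.mp hx with rfl | rfl
      · rcases hNv y hxy with rfl | rfl | rfl <;>
          rcases Sym2.mem_iff.mp hy with rfl | rfl
        · exact hvi b hab hbv
        · rw [Sym2.eq_swap]; exact hvi a hab.symm hav
        · exact hu2 b hab hbv
        · rw [Sym2.eq_swap]; exact hu2 a hab.symm hav
        · exact hu3 b hab hbv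
        · rw [Sym2.eq_swap]; exact hu3 a hab.symm hav
      · rcases hNvi y hxy with rfl | rfl | rfl
        · exact absurd hy hve
        · rcases Sym2.mem_iff.mp hy with rfl | rfl
          · exact hwi b hab hbv
          · rw [Sym2.eq_swap]; exact hwi a hab.symm hav
        · rcases Sym2.mem_iff.mp hy with rfl | rfl
          · exact hwi' b hab hbv
          · rw [Sym2.eq_swap]; exact hwi' a hab.symm hav

set_option maxHeartbeats 1600000 in
/-- If `G` is cubic with girth at least 6, all lists have size at least 11, and
for every vertex `v` every precoloring (from the lists) of one edge `u–w u`
at each neighbor `u` of `v` pointing away from `v` extends to a strong list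
edge coloring of `G − v`, then `G` is strongly `L`-edge-colorable; hence there
is no minimal counterexample to `χ'_{s,l}(G) ≤ 11` for subcubic graphs. -/
theorem no_minimal_counterexample {V β : Type*} [Fintype V]
    (G : SimpleGraph V) [DecidableRel G.Adj]
    (hcubic : ∀ v : V, G.degree v = 3) (hgirth : 6 ≤ G.girth)
    (L : Sym2 V → Finset β) (hL : ∀ e ∈ G.edgeSet, 11 ≤ (L e).card)
    (hextend : ∀ (v : V) (w : V → V) (φ0 : V → β),
      (∀ u, G.Adj v u → G.Adj u (w u) ∧ w u ≠ v ∧ φ0 u ∈ L s(u, w u)) →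
      ∃ φ : Sym2 V → β, IsStrongEdgeColoring (deleteVertex G v) φ ∧
        (∀ f ∈ (deleteVertex G v).edgeSet, φ f ∈ L f) ∧
        ∀ u, G.Adj v u → φ s(u, w u) = φ0 u) :
    StronglyListColorable G L := by
  classical
  cases isEmpty_or_nonempty V with
  | inl hV =>
    exact ⟨fun e => isEmptyElim e, fun e he => isEmptyElim e, fun e he => isEmptyElim e⟩
  | inr hV =>
    obtain ⟨v⟩ := hV
    have hdeg : ∀ x : V, (G.neighborFinset x).card = 3 := fun x => hcubic x
    -- the three neighbors of v
    obtain ⟨v1, v2, v3, hne12, hne13, hne23, hNv⟩ := Finset.card_eq_three.mp (hdeg v)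
    have hAdjv : ∀ z, G.Adj v z ↔ (z = v1 ∨ z = v2 ∨ z = v3) := by
      intro z
      rw [← SimpleGraph.mem_neighborFinset, hNv]
      simp
    have hadj1 : G.Adj v v1 := (hAdjv v1).mpr (Or.inl rfl)
    have hadj2 : G.Adj v v2 := (hAdjv v2).mpr (Or.inr (Or.inl rfl))
    have hadj3 : G.Adj v v3 := (hAdjv v3).mpr (Or.inr (Or.inr rfl))
    -- other neighbors of an endpoint of an edge
    have otherNbrs : ∀ a b : V, G.Adj a b → ∃ p q : V, p ≠ q ∧ p ≠ a ∧ q ≠ a ∧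
        G.Adj b p ∧ G.Adj b q ∧ ∀ z, G.Adj b z → z = a ∨ z = p ∨ z = q := by
      intro a b hab
      have ha : a ∈ G.neighborFinset b := (SimpleGraph.mem_neighborFinset _ _ _).mpr hab.symm
      have hc : ((G.neighborFinset b).erase a).card = 2 := by
        rw [Finset.card_erase_of_mem ha, hdeg b]
      obtain ⟨p, q, hpq, hset⟩ := Finset.card_eq_two.mp hc
      have hp : p ∈ (G.neighborFinset b).erase a := by rw [hset]; simp
      have hq : q ∈ (G.neighborFinset b).erase a := by rw [hset]; simp
      rw [Finset.mem_erase, SimpleGraph.mem_neighborFinset] at hp hq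
      refine ⟨p, q, hpq, hp.1, hq.1, hp.2, hq.2, fun z hz => ?_⟩
      by_cases hza : z = a
      · exact Or.inl hza
      · have hmem : z ∈ (G.neighborFinset b).erase a :=
          Finset.mem_erase.mpr ⟨hza, (SimpleGraph.mem_neighborFinset _ _ _).mpr hz⟩
        rw [hset] at hmem
        rcases Finset.mem_insert.mp hmem with h | h
        · exact Or.inr (Or.inl h)
        · exact Or.inr (Or.inr (Finset.mem_singleton.mp h))
    obtain ⟨w1, w1', hw1ne, hw1v, hw1'v, hadjw1, hadjw1', hchar1⟩ := otherNbrs v v1 hadj1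
    obtain ⟨w2, w2', hw2ne, hw2v, hw2'v, hadjw2, hadjw2', hchar2⟩ := otherNbrs v v2 hadj2
    obtain ⟨w3, w3', hw3ne, hw3v, hw3'v, hadjw3, hadjw3', hchar3⟩ := otherNbrs v v3 hadj3
    -- shrink the relevant lists to size exactly 11
    have shrink : ∀ e ∈ G.edgeSet, ∃ t ⊆ L e, t.card = 11 :=
      fun e he => Finset.exists_subset_card_eq (hL e he)
    obtain ⟨l1, hl1sub, hl1card⟩ := shrink s(v, v1) (G.mem_edgeSet.mpr hadj1)
    obtain ⟨l2, hl2sub, hl2card⟩ := shrink s(v, v2) (G.mem_edgeSet.mpr hadj2)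
    obtain ⟨l3, hl3sub, hl3card⟩ := shrink s(v, v3) (G.mem_edgeSet.mpr hadj3)
    obtain ⟨m1, hm1sub, hm1card⟩ := shrink s(v1, w1) (G.mem_edgeSet.mpr hadjw1)
    obtain ⟨m1', hm1'sub, hm1'card⟩ := shrink s(v1, w1') (G.mem_edgeSet.mpr hadjw1')
    obtain ⟨m2, hm2sub, hm2card⟩ := shrink s(v2, w2) (G.mem_edgeSet.mpr hadjw2)
    obtain ⟨m2', hm2'sub, hm2'card⟩ := shrink s(v2, w2') (G.mem_edgeSet.mpr hadjw2')
    obtain ⟨m3, hm3sub, hm3card⟩ := shrink s(v3, w3) (G.mem_edgeSet.mpr hadjw3)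
    obtain ⟨m3', hm3'sub, hm3'card⟩ := shrink s(v3, w3') (G.mem_edgeSet.mpr hadjw3')
    -- pick the three precoloring colors
    obtain ⟨c1, hc1, c2, hc2, c3, hc3, hksum⟩ :=
      pick_colors l1 l2 l3 (m1 ∪ m1') (m2 ∪ m2') (m3 ∪ m3')
        (le_of_eq hl1card) (le_of_eq hl2card) (le_of_eq hl3card)
        (hm1card ▸ Finset.card_le_card Finset.subset_union_left)
        (hm2card ▸ Finset.card_le_card Finset.subset_union_left)
        (hm3card ▸ Finset.card_le_card Finset.subset_union_left)
    -- choose the precolored edge at each neighbor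
    have hWO1 : ∃ W O : V, G.Adj v1 W ∧ G.Adj v1 O ∧ W ≠ v ∧ O ≠ v ∧
        c1 ∈ L s(v1, W) ∧ ∀ z, G.Adj v1 z → z = v ∨ z = W ∨ z = O := by
      rcases Finset.mem_union.mp hc1 with h | h
      · exact ⟨w1, w1', hadjw1, hadjw1', hw1v, hw1'v, hm1sub h, hchar1⟩
      · refine ⟨w1', w1, hadjw1', hadjw1, hw1'v, hw1v, hm1'sub h, fun z hz => ?_⟩
        rcases hchar1 z hz with h' | h' | h'
        exacts [Or.inl h', Or.inr (Or.inr h'), Or.inr (Or.inl h')]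
    have hWO2 : ∃ W O : V, G.Adj v2 W ∧ G.Adj v2 O ∧ W ≠ v ∧ O ≠ v ∧
        c2 ∈ L s(v2, W) ∧ ∀ z, G.Adj v2 z → z = v ∨ z = W ∨ z = O := by
      rcases Finset.mem_union.mp hc2 with h | h
      · exact ⟨w2, w2', hadjw2, hadjw2', hw2v, hw2'v, hm2sub h, hchar2⟩
      · refine ⟨w2', w2, hadjw2', hadjw2, hw2'v, hw2v, hm2'sub h, fun z hz => ?_⟩
        rcases hchar2 z hz with h' | h' | h'
        exacts [Or.inl h', Or.inr (Or.inr h'), Or.inr (Or.inl h')]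
    have hWO3 : ∃ W O : V, G.Adj v3 W ∧ G.Adj v3 O ∧ W ≠ v ∧ O ≠ v ∧
        c3 ∈ L s(v3, W) ∧ ∀ z, G.Adj v3 z → z = v ∨ z = W ∨ z = O := by
      rcases Finset.mem_union.mp hc3 with h | h
      · exact ⟨w3, w3', hadjw3, hadjw3', hw3v, hw3'v, hm3sub h, hchar3⟩
      · refine ⟨w3', w3, hadjw3', hadjw3, hw3'v, hw3v, hm3'sub h, fun z hz => ?_⟩
        rcases hchar3 z hz with h' | h' | h'
        exacts [Or.inl h', Or.inr (Or.inr h'), Or.inr (Or.inl h')]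
    obtain ⟨W1, O1, hadjW1, hadjO1, hW1v, hO1v, hc1L, hchar1'⟩ := hWO1
    obtain ⟨W2, O2, hadjW2, hadjO2, hW2v, hO2v, hc2L, hchar2'⟩ := hWO2
    obtain ⟨W3, O3, hadjW3, hadjO3, hW3v, hO3v, hc3L, hchar3'⟩ := hWO3
    -- other neighbors of the w-vertices
    obtain ⟨pW1, qW1, -, -, -, hadjpW1, hadjqW1, hcharW1⟩ := otherNbrs v1 W1 hadjW1
    obtain ⟨pO1, qO1, -, -, -, hadjpO1, hadjqO1, hcharO1⟩ := otherNbrs v1 O1 hadjO1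
    obtain ⟨pW2, qW2, -, -, -, hadjpW2, hadjqW2, hcharW2⟩ := otherNbrs v2 W2 hadjW2
    obtain ⟨pO2, qO2, -, -, -, hadjpO2, hadjqO2, hcharO2⟩ := otherNbrs v2 O2 hadjO2
    obtain ⟨pW3, qW3, -, -, -, hadjpW3, hadjqW3, hcharW3⟩ := otherNbrs v3 W3 hadjW3
    obtain ⟨pO3, qO3, -, -, -, hadjpO3, hadjqO3, hcharO3⟩ := otherNbrs v3 O3 hadjO3
    -- extend the precoloring
    obtain ⟨φ, hφs, hφL, hφpre⟩ := hextend v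
      (fun u => if u = v1 then W1 else if u = v2 then W2 else W3)
      (fun u => if u = v1 then c1 else if u = v2 then c2 else c3)
      (by
        intro u hu
        rcases (hAdjv u).mp hu with rfl | rfl | rfl
        · simpa using ⟨hadjW1, hW1v, hc1L⟩
        · simpa [Ne.symm hne12] using ⟨hadjW2, hW2v, hc2L⟩
        · simpa [Ne.symm hne13, Ne.symm hne23] using ⟨hadjW3, hW3v, hc3L⟩)
    have hpre1 : φ s(v1, W1) = c1 := by simpa using hφpre v1 hadj1
    have hpre2 : φ s(v2, W2) = c2 := by simpa [Ne.symm hne12] using hφpre v2 hadj2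
    have hpre3 : φ s(v3, W3) = c3 := by
      simpa [Ne.symm hne13, Ne.symm hne23] using hφpre v3 hadj3
    set C : Finset β := {c1, c2, c3} with hC
    set U1 : Finset β := {φ s(v1, O1), φ s(v2, O2), φ s(v3, O3),
      φ s(W1, pW1), φ s(W1, qW1), φ s(O1, pO1), φ s(O1, qO1)} with hU1
    set U2 : Finset β := {φ s(v1, O1), φ s(v2, O2), φ s(v3, O3),
      φ s(W2, pW2), φ s(W2, qW2), φ s(O2, pO2), φ s(O2, qO2)} with hU2
    set U3 : Finset β := {φ s(v1, O1), φ s(v2, O2), φ s(v3, O3),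
      φ s(W3, pW3), φ s(W3, qW3), φ s(O3, pO3), φ s(O3, qO3)} with hU3
    -- colours around each neighbor vj lie in Ui ∪ C for every i
    have hatv1 : ∀ (Ui : Finset β), φ s(v1, O1) ∈ Ui →
        ∀ z, G.Adj v1 z → z ≠ v → φ s(v1, z) ∈ Ui ∪ C := by
      intro Ui hUm z hz hzv
      rcases hchar1' z hz with rfl | rfl | rfl
      · exact absurd rfl hzv
      · rw [hpre1]; exact Finset.mem_union_right _ (by simp [hC])
      · exact Finset.mem_union_left _ hUm
    have hatv2 : ∀ (Ui : Finset β), φ s(v2, O2) ∈ Ui →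
        ∀ z, G.Adj v2 z → z ≠ v → φ s(v2, z) ∈ Ui ∪ C := by
      intro Ui hUm z hz hzv
      rcases hchar2' z hz with rfl | rfl | rfl
      · exact absurd rfl hzv
      · rw [hpre2]; exact Finset.mem_union_right _ (by simp [hC])
      · exact Finset.mem_union_left _ hUm
    have hatv3 : ∀ (Ui : Finset β), φ s(v3, O3) ∈ Ui →
        ∀ z, G.Adj v3 z → z ≠ v → φ s(v3, z) ∈ Ui ∪ C := by
      intro Ui hUm z hz hzv
      rcases hchar3' z hz with rfl | rfl | rfl
      · exact absurd rfl hzv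
      · rw [hpre3]; exact Finset.mem_union_right _ (by simp [hC])
      · exact Finset.mem_union_left _ hUm
    -- coverage lemmas
    have cov1 : ∀ e ∈ G.edgeSet, v ∉ e → StrongSees G s(v, v1) e → φ e ∈ U1 ∪ C := by
      refine cover_aux G v v1 v2 v3 W1 O1 φ (U1 ∪ C)
        (fun z hz => (hAdjv z).mp hz) hchar1'
        (hatv1 U1 (by simp [hU1]))
        (hatv2 U1 (by simp [hU1]))
        (hatv3 U1 (by simp [hU1]))
        ?_ ?_
      · intro z hz hzv
        rcases hcharW1 z hz with rfl | rfl | rfl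
        · rw [Sym2.eq_swap, hpre1]; exact Finset.mem_union_right _ (by simp [hC])
        · exact Finset.mem_union_left _ (by simp [hU1])
        · exact Finset.mem_union_left _ (by simp [hU1])
      · intro z hz hzv
        rcases hcharO1 z hz with rfl | rfl | rfl
        · rw [Sym2.eq_swap]; exact Finset.mem_union_left _ (by simp [hU1])
        · exact Finset.mem_union_left _ (by simp [hU1])
        · exact Finset.mem_union_left _ (by simp [hU1])
    have cov2 : ∀ e ∈ G.edgeSet, v ∉ e → StrongSees G s(v, v2) e → φ e ∈ U2 ∪ C := by
      refine cover_aux G v v2 v1 v3 W2 O2 φ (U2 ∪ C)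
        (fun z hz => by rcases (hAdjv z).mp hz with h | h | h
                        exacts [Or.inr (Or.inl h), Or.inl h, Or.inr (Or.inr h)]) hchar2'
        (hatv2 U2 (by simp [hU2]))
        (hatv1 U2 (by simp [hU2]))
        (hatv3 U2 (by simp [hU2]))
        ?_ ?_
      · intro z hz hzv
        rcases hcharW2 z hz with rfl | rfl | rfl
        · rw [Sym2.eq_swap, hpre2]; exact Finset.mem_union_right _ (by simp [hC])
        · exact Finset.mem_union_left _ (by simp [hU2])
        · exact Finset.mem_union_left _ (by simp [hU2])
      · intro z hz hzv
        rcases hcharO2 z hz with rfl | rfl | rfl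
        · rw [Sym2.eq_swap]; exact Finset.mem_union_left _ (by simp [hU2])
        · exact Finset.mem_union_left _ (by simp [hU2])
        · exact Finset.mem_union_left _ (by simp [hU2])
    have cov3 : ∀ e ∈ G.edgeSet, v ∉ e → StrongSees G s(v, v3) e → φ e ∈ U3 ∪ C := by
      refine cover_aux G v v3 v1 v2 W3 O3 φ (U3 ∪ C)
        (fun z hz => by rcases (hAdjv z).mp hz with h | h | h
                        exacts [Or.inr (Or.inl h), Or.inr (Or.inr h), Or.inl h]) hchar3'
        (hatv3 U3 (by simp [hU3]))
        (hatv1 U3 (by simp [hU3]))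
        (hatv2 U3 (by simp [hU3]))
        ?_ ?_
      · intro z hz hzv
        rcases hcharW3 z hz with rfl | rfl | rfl
        · rw [Sym2.eq_swap, hpre3]; exact Finset.mem_union_right _ (by simp [hC])
        · exact Finset.mem_union_left _ (by simp [hU3])
        · exact Finset.mem_union_left _ (by simp [hU3])
      · intro z hz hzv
        rcases hcharO3 z hz with rfl | rfl | rfl
        · rw [Sym2.eq_swap]; exact Finset.mem_union_left _ (by simp [hU3])
        · exact Finset.mem_union_left _ (by simp [hU3])
        · exact Finset.mem_union_left _ (by simp [hU3])
    -- the available colour sets at v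
    have hUc1 : U1.card ≤ 7 := by rw [hU1]; exact card_le_seven _ _ _ _ _ _ _
    have hUc2 : U2.card ≤ 7 := by rw [hU2]; exact card_le_seven _ _ _ _ _ _ _
    have hUc3 : U3.card ≤ 7 := by rw [hU3]; exact card_le_seven _ _ _ _ _ _ _
    have hCc : C.card ≤ 3 := by rw [hC]; exact card_le_three _ _ _
    have hAbound : ∀ (li Ui : Finset β), li.card = 11 → Ui.card ≤ 7 →
        4 ≤ (li \ (Ui ∪ C)).card + (li ∩ C).card := by
      intro li Ui hli hUi
      have e1 : li \ (Ui ∪ C) = li \ (Ui ∪ (li ∩ C)) := by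
        ext x
        simp only [Finset.mem_sdiff, Finset.mem_union, Finset.mem_inter]
        tauto
      have e2 := Finset.card_le_card_sdiff_add_card (s := li) (t := Ui ∪ (li ∩ C))
      have e3 : (Ui ∪ (li ∩ C)).card ≤ Ui.card + (li ∩ C).card := Finset.card_union_le _ _
      rw [← e1] at e2
      omega
    have hkb : ∀ li : Finset β, (li ∩ C).card ≤ 3 :=
      fun li => le_trans (Finset.card_le_card Finset.inter_subset_right) hCc
    obtain ⟨a1, ha1, a2, ha2, a3, ha3, hna12, hna13, hna23⟩ :=
      greedy3 (l1 \ (U1 ∪ C)) (l2 \ (U2 ∪ C)) (l3 \ (U3 ∪ C))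
        ((l1 ∩ C).card) ((l2 ∩ C).card) ((l3 ∩ C).card)
        (hAbound l1 U1 hl1card hUc1) (hAbound l2 U2 hl2card hUc2)
        (hAbound l3 U3 hl3card hUc3)
        (hkb l1) (hkb l2) (hkb l3) (by rw [hC]; exact hksum)
    rw [Finset.mem_sdiff] at ha1 ha2 ha3
    obtain ⟨ha1l, ha1n⟩ := ha1
    obtain ⟨ha2l, ha2n⟩ := ha2
    obtain ⟨ha3l, ha3n⟩ := ha3
    -- the full colouring
    set col : Sym2 V → β := fun e => if e = s(v, v1) then a1 else if e = s(v, v2) then a2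
      else if e = s(v, v3) then a3 else φ e with hcoldef
    have hcol1 : col s(v, v1) = a1 := by rw [hcoldef]; simp
    have hcol2 : col s(v, v2) = a2 := by
      rw [hcoldef]
      simp only []
      rw [if_neg (fun h => hne12 (Sym2.congr_right.mp h).symm)]
      simp
    have hcol3 : col s(v, v3) = a3 := by
      rw [hcoldef]
      simp only []
      rw [if_neg (fun h => hne13 (Sym2.congr_right.mp h).symm),
        if_neg (fun h => hne23 (Sym2.congr_right.mp h).symm)]
      simp
    have hcolo : ∀ e, v ∉ e → col e = φ e := by
      intro e hv
      rw [hcoldef]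
      simp only []
      rw [if_neg (by rintro rfl; exact hv (Sym2.mem_mk_left v v1)),
        if_neg (by rintro rfl; exact hv (Sym2.mem_mk_left v v2)),
        if_neg (by rintro rfl; exact hv (Sym2.mem_mk_left v v3))]
    -- classification of edges
    have hclass : ∀ e ∈ G.edgeSet, v ∈ e →
        e = s(v, v1) ∨ e = s(v, v2) ∨ e = s(v, v3) := by
      intro e he hv'
      induction e using Sym2.inductionOn with
      | hf a b =>
        have hab : G.Adj a b := G.mem_edgeSet.mp he
        rcases Sym2.mem_iff.mp hv' with rfl | rfl
        · rcases (hAdjv b).mp hab with rfl | rfl | rfl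
          exacts [Or.inl rfl, Or.inr (Or.inl rfl), Or.inr (Or.inr rfl)]
        · rw [Sym2.eq_swap]
          rcases (hAdjv a).mp hab.symm with rfl | rfl | rfl
          exacts [Or.inl rfl, Or.inr (Or.inl rfl), Or.inr (Or.inr rfl)]
    have hdel : ∀ e ∈ G.edgeSet, v ∉ e → e ∈ (deleteVertex G v).edgeSet := by
      intro e he hv'
      induction e using Sym2.inductionOn with
      | hf a b =>
        have hab : G.Adj a b := G.mem_edgeSet.mp he
        have hav : a ≠ v := fun h => hv' (h ▸ Sym2.mem_mk_left a b)
        have hbv : b ≠ v := fun h => hv' (h ▸ Sym2.mem_mk_right a b)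
        exact (SimpleGraph.mem_edgeSet _).mpr ⟨hab, hav, hbv⟩
    have hseedel : ∀ e e' : Sym2 V, v ∉ e → v ∉ e' → StrongSees G e e' →
        StrongSees (deleteVertex G v) e e' := by
      intro e e' hv1' hv2' hsee
      rcases hsee with ⟨u, h1, h2⟩ | ⟨x, y, h1, h2, h3⟩
      · exact Or.inl ⟨u, h1, h2⟩
      · exact Or.inr ⟨x, y, h1, h2, h3, fun h => hv1' (h ▸ h1), fun h => hv2' (h ▸ h2)⟩
    refine ⟨col, ?_, ?_⟩
    · -- strong colouring
      intro e he e' he' hne hsee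
      by_cases hv1' : v ∈ e <;> by_cases hv2' : v ∈ e'
      · rcases hclass e he hv1' with rfl | rfl | rfl <;>
          rcases hclass e' he' hv2' with rfl | rfl | rfl
        · exact absurd rfl hne
        · rw [hcol1, hcol2]; exact hna12
        · rw [hcol1, hcol3]; exact hna13
        · rw [hcol2, hcol1]; exact fun h => hna12 h.symm
        · exact absurd rfl hne
        · rw [hcol2, hcol3]; exact hna23
        · rw [hcol3, hcol1]; exact fun h => hna13 h.symm
        · rw [hcol3, hcol2]; exact fun h => hna23 h.symm
        · exact absurd rfl hne
      · rcases hclass e he hv1' with rfl | rfl | rfl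
        · rw [hcol1, hcolo e' hv2']
          exact fun h => ha1n (by rw [h]; exact cov1 e' he' hv2' hsee)
        · rw [hcol2, hcolo e' hv2']
          exact fun h => ha2n (by rw [h]; exact cov2 e' he' hv2' hsee)
        · rw [hcol3, hcolo e' hv2']
          exact fun h => ha3n (by rw [h]; exact cov3 e' he' hv2' hsee)
      · have hsee' := strongSees_symm hsee
        rcases hclass e' he' hv2' with rfl | rfl | rfl
        · rw [hcol1, hcolo e hv1']
          exact fun h => ha1n (by rw [← h]; exact cov1 e he hv1' hsee')
        · rw [hcol2, hcolo e hv1']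
          exact fun h => ha2n (by rw [← h]; exact cov2 e he hv1' hsee')
        · rw [hcol3, hcolo e hv1']
          exact fun h => ha3n (by rw [← h]; exact cov3 e he hv1' hsee')
      · rw [hcolo e hv1', hcolo e' hv2']
        exact hφs e (hdel e he hv1') e' (hdel e' he' hv2') hne
          (hseedel e e' hv1' hv2' hsee)
    · -- list membership
      intro e he
      by_cases hv' : v ∈ e
      · rcases hclass e he hv' with rfl | rfl | rfl
        · rw [hcol1]; exact hl1sub ha1l
        · rw [hcol2]; exact hl2sub ha2l
        · rw [hcol3]; exact hl3sub ha3l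
      · rw [hcolo e hv']
        exact hφL e (hdel e he hv')
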